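/- arXiv:2012.08656 — 5 statements merged into one kernel-verified Lean document; each statement's English description precedes it below -/
import Mathlib

section
/- Let K be a field, let Q ∈ K with Q ≠ 0, let s ∈ ℕ, and let c_0, …, c_s ∈ K. Set P(x) := Σ_{j=0}^{s} c_j x^j. Then for every i with 0 ≤ i < s, P(Q^i) = Q^{−binom(i,2)} · (the coefficient of x^{s+i} in the polynomial product (Σ_{j=0}^{s} c_j Q^{−binom(j,2)} x^{s−j}) · (Σ_{ℓ=0}^{2s} Q^{binom(ℓ,2)} x^ℓ)). (Correctness of the chirp-transform algorithm for multipoint evaluation on a geometric progression.) -/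
open Polynomial

lemma choose_two_add (i j : ℕ) :
    (i + j).choose 2 = i.choose 2 + j.choose 2 + i * j := by
  induction j with
  | zero => simp
  | succ n ih =>
    have h1 : (i + n + 1).choose 2 = (i + n).choose 1 + (i + n).choose 2 := by
      rw [Nat.choose_succ_succ]
    have h2 : (n + 1).choose 2 = n.choose 1 + n.choose 2 := by
      rw [Nat.choose_succ_succ]
    simp only [Nat.choose_one_right] at h1 h2
    have : i + (n + 1) = (i + n) + 1 := by ring
    rw [this, h1, ih, h2]
    ring

/-- Correctness of the chirp-transform algorithm for multipoint evaluation on a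
geometric progression: for `P(x) = Σ_{j=0}^{s} c_j x^j` and `Q ≠ 0`, for every
`0 ≤ i < s`, the value `P(Q^i)` equals `Q^{-binom(i,2)}` times the coefficient of
`x^{s+i}` in the product
`(Σ_{j=0}^{s} c_j Q^{-binom(j,2)} x^{s-j}) · (Σ_{ℓ=0}^{2s} Q^{binom(ℓ,2)} x^ℓ)`. -/
theorem chirp_transform_correct {K : Type*} [Field K] (Q : K) (hQ : Q ≠ 0) (s : ℕ)
    (c : ℕ → K) :
    ∀ i < s,
      (∑ j ∈ Finset.range (s + 1), c j * (Q ^ i) ^ j) =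
        Q⁻¹ ^ (Nat.choose i 2) *
          (((∑ j ∈ Finset.range (s + 1),
                Polynomial.C (c j * Q⁻¹ ^ (Nat.choose j 2)) * Polynomial.X ^ (s - j)) *
              (∑ l ∈ Finset.range (2 * s + 1),
                Polynomial.C (Q ^ (Nat.choose l 2)) * Polynomial.X ^ l)).coeff (s + i)) := by
  intro i hi
  have hcoeff :
      (((∑ j ∈ Finset.range (s + 1),
            Polynomial.C (c j * Q⁻¹ ^ (Nat.choose j 2)) * Polynomial.X ^ (s - j)) *
          (∑ l ∈ Finset.range (2 * s + 1),
            Polynomial.C (Q ^ (Nat.choose l 2)) * Polynomial.X ^ l)).coeff (s + i)) =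
        ∑ j ∈ Finset.range (s + 1),
          c j * Q⁻¹ ^ (Nat.choose j 2) * Q ^ (Nat.choose (i + j) 2) := by
    rw [Finset.sum_mul_sum]
    rw [Polynomial.finset_sum_coeff]
    refine Finset.sum_congr rfl ?_
    intro j hj
    rw [Finset.mem_range] at hj
    have hj' : j ≤ s := Nat.lt_succ_iff.mp hj
    rw [Polynomial.finset_sum_coeff]
    have hin : i + j ∈ Finset.range (2 * s + 1) := by
      rw [Finset.mem_range]; omega
    rw [Finset.sum_eq_single_of_mem (i + j) hin]
    · have : Polynomial.C (c j * Q⁻¹ ^ (Nat.choose j 2)) * Polynomial.X ^ (s - j) *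
          (Polynomial.C (Q ^ (Nat.choose (i + j) 2)) * Polynomial.X ^ (i + j)) =
          Polynomial.C (c j * Q⁻¹ ^ (Nat.choose j 2) * Q ^ (Nat.choose (i + j) 2)) *
            Polynomial.X ^ (s - j + (i + j)) := by
        simp only [map_mul, pow_add]; ring
      rw [this, Polynomial.coeff_C_mul, Polynomial.coeff_X_pow, if_pos (by omega), mul_one]
    · intro l hl hne
      have : Polynomial.C (c j * Q⁻¹ ^ (Nat.choose j 2)) * Polynomial.X ^ (s - j) *
          (Polynomial.C (Q ^ (Nat.choose l 2)) * Polynomial.X ^ l) =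
          Polynomial.C (c j * Q⁻¹ ^ (Nat.choose j 2) * Q ^ (Nat.choose l 2)) *
            Polynomial.X ^ (s - j + l) := by
        simp only [map_mul, pow_add]; ring
      rw [this, Polynomial.coeff_C_mul, Polynomial.coeff_X_pow, if_neg (by omega), mul_zero]
  rw [hcoeff, Finset.mul_sum]
  refine Finset.sum_congr rfl ?_
  intro j hj
  rw [choose_two_add i j]
  have hQi : Q⁻¹ = Q⁻¹ := rfl
  field_simp
  rw [pow_add, pow_add, pow_mul]
  have h1 : Q ^ i.choose 2 * Q⁻¹ ^ i.choose 2 = 1 := by rw [← mul_pow, mul_inv_cancel₀ hQ, one_pow]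
  have h2 : Q ^ j.choose 2 * Q⁻¹ ^ j.choose 2 = 1 := by rw [← mul_pow, mul_inv_cancel₀ hQ, one_pow]
  linear_combination (-(c j * Q ^ (i * j))) * h1 - (c j * Q ^ (i * j) * (Q ^ i.choose 2 * Q⁻¹ ^ i.choose 2)) * h2
end

section
/- Let K be a commutative ring, let p, r, t ∈ K and let s ∈ ℕ. Define P(y) := Σ_{j=0}^{s−1} p^j r^j t^{binom(j,2)} y^j. Then Σ_{n=0}^{s²−1} p^n r^n t^{binom(n,2)} = Σ_{k=0}^{s−1} p^{sk} r^{sk} t^{binom(sk,2)} · P(t^{sk}). (This is the baby-step/giant-step decomposition underlying the Nogneng–Schost algorithm: for q with integer exponents 2a and a+b, taking r = q^{a+b} and t = q^{2a} gives p^n q^{an²+bn} = p^n r^n t^{binom(n,2)}, since an²+bn = (a+b)n + 2a·binom(n,2).) -/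
lemma choose_add_two (a b : ℕ) :
    Nat.choose (a + b) 2 = Nat.choose a 2 + Nat.choose b 2 + a * b := by
  induction b with
  | zero => simp
  | succ n ih =>
    rw [← Nat.add_assoc, Nat.choose_succ_succ' (a + n) 1, Nat.choose_succ_succ' n 1, ih]
    simp [Nat.choose_one_right, Nat.mul_succ]
    ring

lemma sum_range_mul_split {K : Type*} [AddCommMonoid K] (f : ℕ → K) (s m : ℕ) :
    (∑ n ∈ Finset.range (s * m), f n) =
      ∑ k ∈ Finset.range m, ∑ j ∈ Finset.range s, f (s * k + j) := by
  induction m with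
  | zero => simp
  | succ n ih =>
    rw [Nat.mul_succ, Finset.sum_range_add, ih, Finset.sum_range_succ]

/-- The baby-step/giant-step decomposition underlying the Nogneng–Schost
algorithm: with `P(y) = Σ_{j=0}^{s-1} p^j r^j t^{binom(j,2)} y^j`, one has
`Σ_{n=0}^{s²-1} p^n r^n t^{binom(n,2)} = Σ_{k=0}^{s-1} p^{sk} r^{sk} t^{binom(sk,2)} · P(t^{sk})`. -/
theorem nogneng_schost_decomposition {K : Type*} [CommRing K] (p r t : K) (s : ℕ) :
    (∑ n ∈ Finset.range (s ^ 2), p ^ n * r ^ n * t ^ (Nat.choose n 2)) =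
      ∑ k ∈ Finset.range s,
        p ^ (s * k) * r ^ (s * k) * t ^ (Nat.choose (s * k) 2) *
          (∑ j ∈ Finset.range s,
            p ^ j * r ^ j * t ^ (Nat.choose j 2) * (t ^ (s * k)) ^ j) := by
  rw [sq, sum_range_mul_split (fun n => p ^ n * r ^ n * t ^ (Nat.choose n 2)) s s]
  refine Finset.sum_congr rfl fun k _ => ?_
  rw [Finset.mul_sum]
  refine Finset.sum_congr rfl fun j _ => ?_
  rw [choose_add_two, pow_add, pow_add, pow_add, pow_add, ← pow_mul]
  ring
end

section
/- Let K be a commutative ring, let p, q ∈ K, let A, B ∈ ℕ, and for x ∈ K define the 2×2 matrices M(x) := [[p·q^B·x^A + 1, −p·q^B·x^A], [1, 0]] and M̃(x) := [[p·q^B·x + 1, −p·q^B·x], [1, 0]], and set q̃ := q^A. Then for every N ∈ ℕ the matrix q-factorials coincide: M(q^{N−1})·M(q^{N−2})⋯M(q)·M(1) = M̃(q̃^{N−1})·M̃(q̃^{N−2})⋯M̃(q̃)·M̃(1). (Correctness of the precomputation trick of Algorithm 4, with A playing the role of 2a and B the role of a+b.) -/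
/-- Correctness of the precomputation trick of Algorithm 4 (with `A` playing
the role of `2a` and `B` the role of `a+b`): with
`M(x) = [[p·q^B·x^A + 1, -p·q^B·x^A], [1, 0]]`,
`M̃(x) = [[p·q^B·x + 1, -p·q^B·x], [1, 0]]` and `q̃ := q^A`, for every `N` the
matrix `q`-factorials coincide:
`M(q^{N-1})⋯M(q)·M(1) = M̃(q̃^{N-1})⋯M̃(q̃)·M̃(1)`. -/
theorem algorithm4_precomputation_correct {K : Type*} [CommRing K] (p q : K)
    (A B : ℕ) (N : ℕ) :
    ((List.range N).reverse.map fun k =>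
        !![p * q ^ B * (q ^ k) ^ A + 1, -(p * q ^ B * (q ^ k) ^ A); 1, 0]).prod =
      ((List.range N).reverse.map fun k =>
        !![p * q ^ B * ((q ^ A) ^ k) + 1, -(p * q ^ B * ((q ^ A) ^ k)); 1, 0]).prod := by
  simp [← pow_mul, Nat.mul_comm]
end

section
/- Let K be a commutative ring, let p, r, t ∈ K, and for x ∈ K define the 2×2 matrix M(x) := [[p·r·x + 1, −p·r·x], [1, 0]]. Then for every N ≥ 1, the (2,1) entry (second row, first column) of the ordered matrix product M(t^{N−1})·M(t^{N−2})⋯M(t)·M(1) equals the sum v_N := Σ_{n=0}^{N−1} p^n r^n t^{binom(n,2)}; equivalently, v_N = (0 1)·M(t^{N−1})⋯M(1)·(1, 0)ᵀ. (This is the matrix-product expression for the sparse sums of Section 2.2: for q with integer exponents 2a and a+b, taking r = q^{a+b} and t = q^{2a} gives v_N = Σ_{n=0}^{N−1} p^n q^{an²+bn}.) -/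
private lemma sparse_aux {K : Type*} [CommRing K] (p r t : K) (N : ℕ) :
    (((List.range N).reverse.map fun k =>
        !![p * r * t ^ k + 1, -(p * r * t ^ k); 1, 0]).prod) 1 0 =
      (∑ n ∈ Finset.range N, p ^ n * r ^ n * t ^ (Nat.choose n 2)) ∧
    (((List.range N).reverse.map fun k =>
        !![p * r * t ^ k + 1, -(p * r * t ^ k); 1, 0]).prod) 0 0 =
      (∑ n ∈ Finset.range (N + 1), p ^ n * r ^ n * t ^ (Nat.choose n 2)) := by
  induction N with
  | zero => simp
  | succ N ih =>
    obtain ⟨h10, h00⟩ := ih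
    have hrev : (List.range (N + 1)).reverse = N :: (List.range N).reverse := by
      rw [List.range_succ, List.reverse_append]; simp
    rw [hrev, List.map_cons, List.prod_cons]
    have hc : Nat.choose (N + 1) 2 = N + Nat.choose N 2 := by
      rw [Nat.choose_succ_succ, Nat.choose_one_right]
    rw [List.map_reverse] at h10 h00
    constructor
    · simp [Matrix.mul_apply, Fin.sum_univ_two, h00]
    · simp only [Matrix.mul_apply, Fin.sum_univ_two]
      simp [h00, h10, Finset.sum_range_succ (n := N + 1), Finset.sum_range_succ (n := N), hc]
      ring

/-- The matrix-product expression for the sparse sums of Section 2.2: with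
`M(x) = [[p·r·x + 1, -p·r·x], [1, 0]]`, for every `N ≥ 1` the `(2,1)` entry
(second row, first column) of the ordered product `M(t^{N-1})⋯M(t)·M(1)` equals
`v_N = Σ_{n=0}^{N-1} p^n r^n t^{binom(n,2)}`. -/
theorem sparse_sum_as_matrix_entry {K : Type*} [CommRing K] (p r t : K) (N : ℕ)
    (hN : 1 ≤ N) :
    (((List.range N).reverse.map fun k =>
        !![p * r * t ^ k + 1, -(p * r * t ^ k); 1, 0]).prod) 1 0 =
      ∑ n ∈ Finset.range N, p ^ n * r ^ n * t ^ (Nat.choose n 2) := by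
  exact (sparse_aux p r t N).1
end

section
/- Let K be a field, let q ∈ K and let m, n ∈ ℕ be such that the q-brackets [i]_q are nonzero for all 1 ≤ i ≤ m+n, and define the Gaussian binomial coefficients binom(a,b)_q := [a]_q!/([b]_q!·[a−b]_q!) for 0 ≤ b ≤ a ≤ m+n (with binom(a,b)_q := 0 when b > a). Then the q-Chu–Vandermonde identity holds: Σ_{k=0}^{n} q^{k²} · binom(m,k)_q · binom(n,k)_q = binom(m+n,n)_q. (This is identity (2) of the paper, used in Corollary 1.) -/
/-- The `q`-bracket `[a]_q = 1 + q + ⋯ + q^{a-1}`. -/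
def qBracket {K : Type*} [CommRing K] (q : K) (a : ℕ) : K :=
  ∑ i ∈ Finset.range a, q ^ i

/-- The `q`-factorial `[a]_q! = ∏_{k=1}^{a} [k]_q`. -/
def qFactorial {K : Type*} [CommRing K] (q : K) (a : ℕ) : K :=
  ∏ k ∈ Finset.range a, qBracket q (k + 1)

/-- The Gaussian binomial coefficient `binom(a,b)_q = [a]_q!/([b]_q!·[a-b]_q!)`
for `b ≤ a`, and `0` for `b > a`. -/
noncomputable def qBinom {K : Type*} [Field K] (q : K) (a b : ℕ) : K :=
  if b ≤ a then qFactorial q a / (qFactorial q b * qFactorial q (a - b)) else 0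

section Aux

variable {K : Type*} [Field K] (q : K)

lemma qBracket_add (c d : ℕ) : qBracket q (c + d) = qBracket q c + q ^ c * qBracket q d := by
  simp [qBracket, Finset.sum_range_add, Finset.mul_sum, pow_add]

lemma qFactorial_succ (a : ℕ) : qFactorial q (a + 1) = qFactorial q a * qBracket q (a + 1) :=
  Finset.prod_range_succ _ _

@[simp] lemma qFactorial_zero : qFactorial q 0 = 1 := rfl

lemma qFactorial_ne_zero {a : ℕ} (h : ∀ i, 1 ≤ i → i ≤ a → qBracket q i ≠ 0) :
    qFactorial q a ≠ 0 := by
  apply Finset.prod_ne_zero_iff.mpr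
  intro k hk
  exact h (k + 1) (by omega) (by have := Finset.mem_range.mp hk; omega)

lemma qBinom_zero {a : ℕ} (ha : qFactorial q a ≠ 0) : qBinom q a 0 = 1 := by
  simp [qBinom, div_self, ha]

lemma qBinom_self {a : ℕ} (ha : qFactorial q a ≠ 0) : qBinom q a a = 1 := by
  simp [qBinom, div_self, ha]

lemma qBinom_of_gt {a b : ℕ} (hab : a < b) : qBinom q a b = 0 := by
  simp [qBinom, Nat.not_le.mpr hab]

lemma qBinom_pascalA (a b : ℕ) (h : ∀ i, 1 ≤ i → i ≤ a + 1 → qBracket q i ≠ 0) :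
    qBinom q (a+1) (b+1) = qBinom q a b + q^(b+1) * qBinom q a (b+1) := by
  have hFa : qFactorial q a ≠ 0 := qFactorial_ne_zero q (fun i h1 h2 => h i h1 (by omega))
  have hFa1 : qFactorial q (a+1) ≠ 0 := qFactorial_ne_zero q h
  rcases lt_trichotomy b a with hba | rfl | hba
  · have hFb : qFactorial q b ≠ 0 := qFactorial_ne_zero q (fun i h1 h2 => h i h1 (by omega))
    have hBb1 : qBracket q (b+1) ≠ 0 := h _ (by omega) (by omega)
    have hFab1 : qFactorial q (a-b-1) ≠ 0 :=
      qFactorial_ne_zero q (fun i h1 h2 => h i h1 (by omega))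
    have hBab : qBracket q (a-b) ≠ 0 := h _ (by omega) (by omega)
    have key : qBracket q (a+1) = qBracket q (b+1) + q^(b+1) * qBracket q (a-b) := by
      rw [show a+1 = (b+1)+(a-b) by omega, qBracket_add]
    have e3 : qFactorial q (a-b) = qFactorial q (a-b-1) * qBracket q (a-b) := by
      have := qFactorial_succ q (a-b-1)
      rwa [show a-b-1+1 = a-b by omega] at this
    rw [qBinom, qBinom, qBinom, if_pos (by omega), if_pos (by omega), if_pos (by omega),
      show a+1-(b+1) = a-b by omega, show a-(b+1) = a-b-1 by omega,
      qFactorial_succ q a, qFactorial_succ q b, e3, key]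
    field_simp
  · rw [qBinom_self q hFa1, qBinom_self q hFa, qBinom_of_gt q (by omega)]
    ring
  · rw [qBinom_of_gt q (by omega), qBinom_of_gt q (by omega), qBinom_of_gt q (by omega)]
    ring

lemma qBinom_pascalB (a b : ℕ) (h : ∀ i, 1 ≤ i → i ≤ a + 1 → qBracket q i ≠ 0) :
    qBinom q (a+1) (b+1) = q^(a-b) * qBinom q a b + qBinom q a (b+1) := by
  have hFa : qFactorial q a ≠ 0 := qFactorial_ne_zero q (fun i h1 h2 => h i h1 (by omega))
  have hFa1 : qFactorial q (a+1) ≠ 0 := qFactorial_ne_zero q h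
  rcases lt_trichotomy b a with hba | rfl | hba
  · have hFb : qFactorial q b ≠ 0 := qFactorial_ne_zero q (fun i h1 h2 => h i h1 (by omega))
    have hBb1 : qBracket q (b+1) ≠ 0 := h _ (by omega) (by omega)
    have hFab1 : qFactorial q (a-b-1) ≠ 0 :=
      qFactorial_ne_zero q (fun i h1 h2 => h i h1 (by omega))
    have hBab : qBracket q (a-b) ≠ 0 := h _ (by omega) (by omega)
    have key : qBracket q (a+1) = qBracket q (a-b) + q^(a-b) * qBracket q (b+1) := by
      rw [show a+1 = (a-b)+(b+1) by omega, qBracket_add]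
    have e3 : qFactorial q (a-b) = qFactorial q (a-b-1) * qBracket q (a-b) := by
      have := qFactorial_succ q (a-b-1)
      rwa [show a-b-1+1 = a-b by omega] at this
    rw [qBinom, qBinom, qBinom, if_pos (by omega), if_pos (by omega), if_pos (by omega),
      show a+1-(b+1) = a-b by omega, show a-(b+1) = a-b-1 by omega,
      qFactorial_succ q a, qFactorial_succ q b, e3, key]
    field_simp
    ring
  · rw [qBinom_self q hFa1, qBinom_self q hFa, qBinom_of_gt q (by omega)]
    simp
  · rw [qBinom_of_gt q (by omega), qBinom_of_gt q (by omega), qBinom_of_gt q (by omega)]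
    ring

lemma key_lemma (m : ℕ) : ∀ n r, (∀ i, 1 ≤ i → i ≤ m + n → qBracket q i ≠ 0) →
    (∑ j ∈ Finset.range (n+1), q ^ (j*(j+r)) * qBinom q m (j+r) * qBinom q n j)
      = qBinom q (m+n) (n+r) := by
  intro n
  induction n with
  | zero =>
    intro r h
    have hF0 : qFactorial q 0 ≠ 0 := one_ne_zero
    simp [qBinom_self q hF0]
  | succ n ih =>
    intro r h
    have h' : ∀ i, 1 ≤ i → i ≤ m + n → qBracket q i ≠ 0 := fun i h1 h2 => h i h1 (by omega)
    have hn1 : ∀ i, 1 ≤ i → i ≤ n + 1 → qBracket q i ≠ 0 := fun i h1 h2 => h i h1 (by omega)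
    have hmn1 : ∀ i, 1 ≤ i → i ≤ (m + n) + 1 → qBracket q i ≠ 0 :=
      fun i h1 h2 => h i h1 (by omega)
    have hFn : qFactorial q n ≠ 0 :=
      qFactorial_ne_zero q (fun i h1 h2 => h i h1 (by omega))
    have hFn1 : qFactorial q (n+1) ≠ 0 := qFactorial_ne_zero q hn1
    rw [Finset.sum_range_succ']
    have step : ∀ i ∈ Finset.range (n+1),
        q ^ ((i+1)*((i+1)+r)) * qBinom q m ((i+1)+r) * qBinom q (n+1) (i+1)
        = (q ^ ((n+1)+r) * (q ^ (i*(i+(r+1))) * qBinom q m (i+(r+1)) * qBinom q n i))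
          + q ^ ((i+1)*((i+1)+r)) * qBinom q m ((i+1)+r) * qBinom q n (i+1) := by
      intro i hi
      have hi' : i ≤ n := by
        have := Finset.mem_range.mp hi; omega
      rw [qBinom_pascalB q n i hn1]
      have hC : i + (r+1) = (i+1)+r := by omega
      rw [hC]
      have hq : q ^ ((i+1)*((i+1)+r)) * q ^ (n-i) = q ^ ((n+1)+r) * q ^ (i*((i+1)+r)) := by
        rw [← pow_add, ← pow_add]
        congr 1
        obtain ⟨d, rfl⟩ : ∃ d, n = i + d := ⟨n - i, by omega⟩
        rw [Nat.add_sub_cancel_left]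
        ring
      linear_combination (qBinom q m ((i+1)+r) * qBinom q n i) * hq
    rw [Finset.sum_congr rfl step, Finset.sum_add_distrib, ← Finset.mul_sum, ih (r+1) h']
    have hf0 : q ^ (0*(0+r)) * qBinom q m (0+r) * qBinom q (n+1) 0
        = q ^ (0*(0+r)) * qBinom q m (0+r) * qBinom q n 0 := by
      rw [qBinom_zero q hFn, qBinom_zero q hFn1]
    have collect : (∑ i ∈ Finset.range (n+1),
          q ^ ((i+1)*((i+1)+r)) * qBinom q m ((i+1)+r) * qBinom q n (i+1))
        + q ^ (0*(0+r)) * qBinom q m (0+r) * qBinom q n 0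
        = ∑ j ∈ Finset.range (n+1), q ^ (j*(j+r)) * qBinom q m (j+r) * qBinom q n j := by
      rw [← Finset.sum_range_succ'
          (fun j => q ^ (j*(j+r)) * qBinom q m (j+r) * qBinom q n j) (n+1),
        Finset.sum_range_succ, qBinom_of_gt q (Nat.lt_succ_self n), mul_zero, add_zero]
    rw [hf0, show (n:ℕ)+1+r = (n+r)+1 by omega, show n+(r+1) = (n+r)+1 by omega,
      show m+(n+1) = (m+n)+1 by omega, qBinom_pascalA q (m+n) (n+r) hmn1]
    linear_combination collect + ih r h'

end Aux

/-- The `q`-Chu–Vandermonde identity (identity (2) of the paper): if `[i]_q ≠ 0`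
for `1 ≤ i ≤ m+n`, then `Σ_{k=0}^{n} q^{k²}·binom(m,k)_q·binom(n,k)_q = binom(m+n,n)_q`. -/
theorem q_chu_vandermonde {K : Type*} [Field K] (q : K) (m n : ℕ)
    (h : ∀ i, 1 ≤ i → i ≤ m + n → qBracket q i ≠ 0) :
    (∑ k ∈ Finset.range (n + 1), q ^ (k ^ 2) * qBinom q m k * qBinom q n k) =
      qBinom q (m + n) n := by
  simpa [sq] using key_lemma q m n 0 h
end
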